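/- Let F be a field, m ≥ 1, ℓ ≥ 0, and let S ⊆ F^m be an m-dimensional ℓ-th order simplicial configuration (defined recursively: for m = 1, any set of ℓ+1 distinct points in F; for m ≥ 2, a set of C(m+ℓ, ℓ) points lying on ℓ+1 distinct hyperplanes x_m = a_1, ..., x_m = a_{ℓ+1}, with exactly C(m−1+j−1, j−1) points on x_m = a_j whose projections to the first m−1 coordinates form an (m−1)-dimensional simplicial configuration of order j−1). Then the C(m+ℓ,ℓ) × C(m+ℓ,ℓ) matrix V(P_ℓ(m); S), with rows indexed by exponent vectors e ∈ Z_{≥0}^m with e_1 + ... + e_m ≤ ℓ and columns indexed by points p ∈ S, with entry p^e = ∏_i p_i^{e_i}, is nonsingular. -/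

import Mathlib

/-- `IsSimplicialConfig F m ℓ S` : `S` is an `(m+1)`-dimensional simplicial configuration
of order `ℓ` (so the actual dimension is `m + 1 ≥ 1`).  For dimension `1` it is any set of
`ℓ + 1` distinct points; in higher dimension `S` consists of `C((m+1)+ℓ, ℓ)` points lying
on `ℓ+1` distinct hyperplanes `x_last = a j`, with exactly `C(m + 1 + j, j)` points on the
`j`-th hyperplane (indexing `j = 0, ..., ℓ`), whose projections to the first coordinates
form a lower-dimensional simplicial configuration of order `j`. -/
def IsSimplicialConfig (F : Type*) [DecidableEq F] :
    (m : ℕ) → (l : ℕ) → Finset (Fin (m + 1) → F) → Prop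
  | 0, l, S => S.card = l + 1
  | m + 1, l, S =>
      S.card = Nat.choose (m + 2 + l) l ∧
      ∃ a : Fin (l + 1) → F, Function.Injective a ∧
        (∀ p ∈ S, ∃ j, p (Fin.last (m + 1)) = a j) ∧
        ∀ j : Fin (l + 1),
          (S.filter fun p => p (Fin.last (m + 1)) = a j).card
            = Nat.choose (m + 1 + (j : ℕ)) (j : ℕ) ∧
          IsSimplicialConfig F m (j : ℕ)
            ((S.filter fun p => p (Fin.last (m + 1)) = a j).image fun p => p ∘ Fin.castSucc)


open MvPolynomial

lemma td_le_of_finSuccEquiv_coeff {F : Type*} [CommSemiring F] {n d : ℕ}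
    (f : MvPolynomial (Fin (n + 1)) F)
    (h : ∀ k, ((finSuccEquiv F n f).coeff k) ≠ 0 →
        ((finSuccEquiv F n f).coeff k).totalDegree + k ≤ d) :
    f.totalDegree ≤ d := by
  rw [totalDegree]
  apply Finset.sup_le
  intro m hm
  have h1 : Finsupp.tail m ∈ ((finSuccEquiv F n f).coeff (m 0)).support := by
    rw [mem_support_coeff_finSuccEquiv, Finsupp.cons_tail]; exact hm
  have h2 := h (m 0) (by
    intro h0
    rw [h0] at h1
    simp at h1)
  have h3 : ((Finsupp.tail m).sum fun _ e => e)
      ≤ ((finSuccEquiv F n f).coeff (m 0)).totalDegree := le_totalDegree h1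
  calc (m.sum fun _ e => e)
      = ((Finsupp.cons (m 0) (Finsupp.tail m)).sum fun _ e => e) := by
        rw [Finsupp.cons_tail]
    _ = m 0 + ((Finsupp.tail m).sum fun _ e => e) := Finsupp.sum_cons _ _ _
    _ ≤ d := by omega

lemma td_coeff_quot {F : Type*} {σ : Type*} [CommRing F] {l : ℕ}
    (c : MvPolynomial σ F) (hc : c.totalDegree = 0)
    (Φ₁ : Polynomial (MvPolynomial σ F))
    (hΦ : ∀ k : ℕ, (((Polynomial.X - Polynomial.C c) * Φ₁).coeff (k + 1)) ≠ 0 →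
      (((Polynomial.X - Polynomial.C c) * Φ₁).coeff (k + 1)).totalDegree + (k + 1) ≤ l + 1) :
    ∀ j k : ℕ, Φ₁.natDegree < k + j → Φ₁.coeff k ≠ 0 →
      (Φ₁.coeff k).totalDegree + k ≤ l := by
  intro j
  induction j with
  | zero =>
    intro k h hk
    exact absurd (Polynomial.coeff_eq_zero_of_natDegree_lt (by omega)) hk
  | succ j ih =>
    intro k h hk
    have hrec : Φ₁.coeff k
        = ((Polynomial.X - Polynomial.C c) * Φ₁).coeff (k + 1) + c * Φ₁.coeff (k + 1) := by
      rw [sub_mul, Polynomial.coeff_sub, Polynomial.coeff_X_mul, Polynomial.coeff_C_mul]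
      ring
    have b1 : ((Polynomial.X - Polynomial.C c) * Φ₁).coeff (k + 1) = 0 ∨
        (((Polynomial.X - Polynomial.C c) * Φ₁).coeff (k + 1)).totalDegree + k + 1 ≤ l + 1 := by
      rcases eq_or_ne (((Polynomial.X - Polynomial.C c) * Φ₁).coeff (k + 1)) 0 with h0 | h0
      · exact Or.inl h0
      · right; have := hΦ k h0; omega
    have b2 : c * Φ₁.coeff (k + 1) = 0 ∨
        (c * Φ₁.coeff (k + 1)).totalDegree + k + 1 ≤ l := by
      rcases eq_or_ne (Φ₁.coeff (k + 1)) 0 with h0 | h0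
      · exact Or.inl (by rw [h0, mul_zero])
      · right
        have h4 := ih (k + 1) (by omega) h0
        have h5 := totalDegree_mul c (Φ₁.coeff (k + 1))
        omega
    have hadd : (Φ₁.coeff k).totalDegree ≤
        max (((Polynomial.X - Polynomial.C c) * Φ₁).coeff (k + 1)).totalDegree
            (c * Φ₁.coeff (k + 1)).totalDegree := by
      rw [hrec]; exact totalDegree_add _ _
    have hor := le_max_iff.mp hadd
    rcases b1 with h1 | h1 <;> rcases b2 with h2 | h2
    · exact absurd (by rw [hrec, h1, h2, add_zero]) hk
    · have ht : (((Polynomial.X - Polynomial.C c) * Φ₁).coeff (k + 1)).totalDegree = 0 := by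
        rw [h1]; exact totalDegree_zero
      omega
    · have ht : (c * Φ₁.coeff (k + 1)).totalDegree = 0 := by
        rw [h2]; exact totalDegree_zero
      omega
    · omega

lemma eval_eq_eval_last {F : Type*} [CommSemiring F] {n : ℕ}
    (Q : MvPolynomial (Fin (n + 1)) F) (p : Fin (n + 1) → F) :
    eval p Q = Polynomial.eval (p (Fin.last n))
      ((finSuccEquiv F n (rename (⇑(finRotate (n + 1))) Q)).map
        (eval (p ∘ Fin.castSucc))) := by
  have hc : (Fin.cons (p (Fin.last n)) (p ∘ Fin.castSucc) : Fin (n + 1) → F)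
      ∘ ⇑(finRotate (n + 1)) = p := by
    funext i
    induction i using Fin.lastCases with
    | last => simp [finRotate_last]
    | cast i =>
      simp only [Function.comp_apply, finRotate_succ_apply, Fin.coeSucc_eq_succ,
        Fin.cons_succ]
  calc eval p Q
      = eval ((Fin.cons (p (Fin.last n)) (p ∘ Fin.castSucc) : Fin (n + 1) → F)
          ∘ ⇑(finRotate (n + 1))) Q := by rw [hc]
    _ = eval (Fin.cons (p (Fin.last n)) (p ∘ Fin.castSucc) : Fin (n + 1) → F)
          (rename (⇑(finRotate (n + 1))) Q) := by rw [eval_rename]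
    _ = _ := eval_eq_eval_mv_eval' _ _ _

lemma eval_poly_eval_C {F : Type*} {σ : Type*} [CommSemiring F]
    (x : σ → F) (c : F) (Φ : Polynomial (MvPolynomial σ F)) :
    eval x (Polynomial.eval (C c) Φ) = Polynomial.eval c (Φ.map (eval x)) := by
  rw [show Polynomial.eval (C c) Φ = Φ.eval₂ (RingHom.id _) (C c) from rfl,
    Polynomial.hom_eval₂, RingHom.comp_id, eval_C, Polynomial.eval₂_eq_eval_map]

lemma vanish_base {F : Type*} [Field F] [DecidableEq F] (l : ℕ)
    (S : Finset (Fin 1 → F)) (hS : S.card = l + 1)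
    (P : MvPolynomial (Fin 1) F) (hd : P.totalDegree ≤ l)
    (hv : ∀ p ∈ S, eval p P = 0) : P = 0 := by
  set q : Polynomial F :=
    (finSuccEquiv F 0 P).map (eval (fun i : Fin 0 => i.elim0)) with hq
  have hqev : ∀ p ∈ S, q.eval (p 0) = 0 := by
    intro p hp
    have hp1 : (Fin.cons (p 0) (p ∘ Fin.succ) : Fin 1 → F) = p := by
      funext i
      have : i = 0 := Fin.fin_one_eq_zero i
      subst this
      exact Fin.cons_zero _ _
    have h2 : (p ∘ Fin.succ : Fin 0 → F) = fun i : Fin 0 => i.elim0 := by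
      funext i; exact i.elim0
    have := eval_eq_eval_mv_eval' (p ∘ Fin.succ) (p 0) P
    rw [hp1, hv p hp, h2] at this
    exact this.symm
  have hinj : Function.Injective (fun p : Fin 1 → F => p 0) := by
    intro p p' h
    funext i
    have : i = 0 := Fin.fin_one_eq_zero i
    subst this
    exact h
  have hcard : q.natDegree < (S.image fun p => p 0).card := by
    rw [Finset.card_image_of_injective _ hinj, hS]
    have h1 : q.natDegree ≤ (finSuccEquiv F 0 P).natDegree := Polynomial.natDegree_map_le
    have h2 : (finSuccEquiv F 0 P).natDegree = P.degreeOf 0 := natDegree_finSuccEquiv P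
    have h3 : P.degreeOf 0 ≤ P.totalDegree := degreeOf_le_totalDegree P 0
    omega
  have hq0 : q = 0 := by
    apply Polynomial.eq_zero_of_natDegree_lt_card_of_eval_eq_zero' q _ _ hcard
    intro i hi
    obtain ⟨p, hp, rfl⟩ := Finset.mem_image.mp hi
    exact hqev p hp
  have hev_inj : Function.Injective (eval (fun i : Fin 0 => i.elim0) :
      MvPolynomial (Fin 0) F → F) := by
    intro g1 g2 h
    rw [eq_C_of_isEmpty g1, eq_C_of_isEmpty g2]
    rw [eq_C_of_isEmpty g1, eq_C_of_isEmpty g2, eval_C, eval_C] at h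
    rw [h]
  have hΦ : finSuccEquiv F 0 P = 0 := (Polynomial.map_eq_zero_iff hev_inj).mp hq0
  apply (finSuccEquiv F 0).injective
  rw [hΦ, map_zero]

lemma vanish_order_zero {F : Type*} [Field F] [DecidableEq F] {n : ℕ}
    (S : Finset (Fin (n + 1) → F)) (hcard : 0 < S.card)
    (P : MvPolynomial (Fin (n + 1)) F) (hd : P.totalDegree ≤ 0)
    (hv : ∀ p ∈ S, eval p P = 0) : P = 0 := by
  have h0 : P.totalDegree = 0 := Nat.le_zero.mp hd
  have key := (totalDegree_eq_zero_iff _ P).mp h0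
  have hP : P = C (P.coeff 0) := by
    ext d
    rw [coeff_C]
    split_ifs with h
    · rw [← h]
    · by_contra hc
      have hd' : d ∈ P.support := mem_support_iff.mpr hc
      exact h (Eq.symm (Finsupp.ext fun i => key d hd' i))
  obtain ⟨p, hp⟩ := Finset.card_pos.mp hcard
  have := hv p hp
  rw [hP, eval_C] at this
  rw [hP, this, map_zero]

lemma vanish_of_simplicialConfig {F : Type*} [Field F] [DecidableEq F] :
    ∀ (m l : ℕ) (S : Finset (Fin (m + 1) → F)), IsSimplicialConfig F m l S →
      ∀ P : MvPolynomial (Fin (m + 1)) F, P.totalDegree ≤ l →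
        (∀ p ∈ S, eval p P = 0) → P = 0 := by
  intro m
  induction m with
  | zero =>
    intro l S hS P hd hv
    exact vanish_base l S hS P hd hv
  | succ m ihm =>
    intro l
    induction l with
    | zero =>
      intro S hS P hd hv
      obtain ⟨hcard, -⟩ := hS
      refine vanish_order_zero S ?_ P hd hv
      rw [hcard]
      simp [Nat.choose]
    | succ l ihl =>
      intro S hS P hd hv
      obtain ⟨hcard', a, ha_inj, hcov', hpl''⟩ := hS
      have hcard : S.card = Nat.choose (m + 2 + (l + 1)) (l + 1) := hcard'
      have hcov : ∀ p ∈ S, ∃ j : Fin (l + 2), p (Fin.last (m + 1)) = a j := hcov'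
      have hpl : ∀ j : Fin (l + 2),
          (S.filter fun p => p (Fin.last (m + 1)) = a j).card
            = Nat.choose (m + 1 + (j : ℕ)) (j : ℕ) ∧
          IsSimplicialConfig F m (j : ℕ)
            ((S.filter fun p => p (Fin.last (m + 1)) = a j).image
              fun p => p ∘ Fin.castSucc) := hpl''
      clear hcard' hcov' hpl''
      set ca := a (Fin.last (l + 1)) with hca
      set Pr := rename (⇑(finRotate (m + 2))) P with hPr
      set Φ := finSuccEquiv F (m + 1) Pr with hΦdef
      have hdPr : Pr.totalDegree ≤ l + 1 := le_trans (totalDegree_rename_le _ _) hd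
      have hcoef : ∀ k, Φ.coeff k ≠ 0 → (Φ.coeff k).totalDegree + k ≤ l + 1 := by
        intro k hk
        exact le_trans (totalDegree_coeff_finSuccEquiv_add_le Pr k hk) hdPr
      set R := Polynomial.eval (C ca) Φ with hRdef
      have hRdeg : R.totalDegree ≤ l + 1 := by
        rw [hRdef, Polynomial.eval_eq_sum, Polynomial.sum_def]
        refine le_trans (totalDegree_finset_sum _ _) (Finset.sup_le ?_)
        intro k hk
        have hk' : Φ.coeff k ≠ 0 := Polynomial.mem_support_iff.mp hk
        have h1 := hcoef k hk'
        have h2 := totalDegree_mul (Φ.coeff k) ((C ca : MvPolynomial (Fin (m + 1)) F) ^ k)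
        have h3 : ((C ca : MvPolynomial (Fin (m + 1)) F) ^ k).totalDegree
            ≤ k * (C ca : MvPolynomial (Fin (m + 1)) F).totalDegree := totalDegree_pow _ _
        rw [totalDegree_C] at h3
        omega
      have hcfg_last : IsSimplicialConfig F m (l + 1)
          ((S.filter fun p => p (Fin.last (m + 1)) = ca).image fun p => p ∘ Fin.castSucc) := by
        have := (hpl (Fin.last (l + 1))).2
        simpa using this
      have hRvan : ∀ x ∈ (S.filter fun p => p (Fin.last (m + 1)) = ca).image
          (fun p => p ∘ Fin.castSucc), eval x R = 0 := by
        intro x hx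
        obtain ⟨p, hp, rfl⟩ := Finset.mem_image.mp hx
        obtain ⟨hpS, hplast⟩ := Finset.mem_filter.mp hp
        rw [hRdef, eval_poly_eval_C]
        have hkey := eval_eq_eval_last P p
        rw [hplast, ← hPr, ← hΦdef] at hkey
        rw [← hkey]
        exact hv p hpS
      have hR0 : R = 0 := ihm (l + 1) _ hcfg_last R hRdeg hRvan
      obtain ⟨Φ₁, hfac⟩ : (Polynomial.X - Polynomial.C (C ca)) ∣ Φ :=
        Polynomial.dvd_iff_isRoot.mpr hR0
      have hb := td_coeff_quot (C ca) (totalDegree_C ca) Φ₁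
        (fun k hk => by rw [← hfac] at hk ⊢; exact hcoef (k + 1) hk)
      set P₁r := (finSuccEquiv F (m + 1)).symm Φ₁ with hP₁rdef
      have hfse : finSuccEquiv F (m + 1) P₁r = Φ₁ := AlgEquiv.apply_symm_apply _ _
      have hd₁r : P₁r.totalDegree ≤ l := by
        refine td_le_of_finSuccEquiv_coeff P₁r ?_
        rw [hfse]
        exact fun k hk => hb (Φ₁.natDegree + 1) k (by omega) hk
      set P₁ := rename (⇑(finRotate (m + 2)).symm) P₁r with hP₁def
      have hre : rename (⇑(finRotate (m + 2))) P₁ = P₁r := by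
        rw [hP₁def, rename_rename, Equiv.self_comp_symm, rename_id, AlgHom.id_apply]
      have hd₁ : P₁.totalDegree ≤ l := le_trans (totalDegree_rename_le _ _) hd₁r
      set S' := S.filter (fun p => ¬ p (Fin.last (m + 1)) = ca) with hS'def
      have hvan₁ : ∀ p ∈ S', eval p P₁ = 0 := by
        intro p hp
        obtain ⟨hpS, hne⟩ := Finset.mem_filter.mp hp
        have h1 := hv p hpS
        rw [eval_eq_eval_last P p, ← hPr, ← hΦdef, hfac, Polynomial.map_mul,
          Polynomial.map_sub, Polynomial.map_X, Polynomial.map_C, eval_C,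
          Polynomial.eval_mul, Polynomial.eval_sub, Polynomial.eval_X,
          Polynomial.eval_C] at h1
        have h2 : p (Fin.last (m + 1)) - ca ≠ 0 := sub_ne_zero.mpr hne
        have h3 := (mul_eq_zero.mp h1).resolve_left h2
        rw [eval_eq_eval_last P₁ p, hre, hfse]
        exact h3
      have hS' : IsSimplicialConfig F (m + 1) l S' := by
        show S'.card = Nat.choose (m + 1 + 1 + l) l ∧
          ∃ b : Fin (l + 1) → F, Function.Injective b ∧
            (∀ p ∈ S', ∃ j, p (Fin.last (m + 1)) = b j) ∧
            ∀ j : Fin (l + 1),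
              (S'.filter fun p => p (Fin.last (m + 1)) = b j).card
                = Nat.choose (m + 1 + (j : ℕ)) (j : ℕ) ∧
              IsSimplicialConfig F m (j : ℕ)
                ((S'.filter fun p => p (Fin.last (m + 1)) = b j).image
                  fun p => p ∘ Fin.castSucc)
        refine ⟨?_, a ∘ Fin.castSucc, ha_inj.comp (Fin.castSucc_injective _), ?_, ?_⟩
        · have h1 : S' = S \ (S.filter fun p => p (Fin.last (m + 1)) = ca) :=
            Finset.filter_not _ _
          have h2 := (hpl (Fin.last (l + 1))).1
          rw [← hca] at h2
          simp only [Fin.val_last] at h2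
          rw [h1, Finset.card_sdiff_of_subset (Finset.filter_subset _ _), hcard, h2]
          have hp2 := Nat.choose_succ_succ (m + 2 + l) l
          simp only [Nat.succ_eq_add_one] at hp2
          have e : Nat.choose (m + 1 + (l + 1)) (l + 1)
              = Nat.choose (m + 2 + l) (l + 1) := by
            congr 1 <;> (clear * -; omega)
          have e1 : Nat.choose (m + 2 + (l + 1)) (l + 1)
              = Nat.choose (m + 2 + l + 1) (l + 1) := by
            congr 1
          have e2 : Nat.choose (m + 1 + 1 + l) l = Nat.choose (m + 2 + l) l := by
            congr 1 <;> (clear * -; omega)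
          clear * - hp2 e e1 e2
          omega
        · intro p hp
          obtain ⟨hpS, hne⟩ := Finset.mem_filter.mp hp
          obtain ⟨j, hj⟩ := hcov p hpS
          have hjne : j ≠ Fin.last (l + 1) := by
            rintro rfl; exact hne hj
          obtain ⟨j', rfl⟩ := Fin.exists_castSucc_eq.mpr hjne
          exact ⟨j', hj⟩
        · intro j
          have hfilter : (S'.filter fun p => p (Fin.last (m + 1)) = (a ∘ Fin.castSucc) j)
              = S.filter fun p => p (Fin.last (m + 1)) = a (Fin.castSucc j) := by
            ext p
            simp only [hS'def, Finset.mem_filter, Function.comp_apply]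
            constructor
            · rintro ⟨⟨h1, h2⟩, h3⟩; exact ⟨h1, h3⟩
            · rintro ⟨h1, h3⟩
              refine ⟨⟨h1, ?_⟩, h3⟩
              rw [h3, hca]
              intro hcontra
              exact absurd (ha_inj hcontra) (Fin.castSucc_lt_last j).ne
          have h2 := hpl (Fin.castSucc j)
          rw [Fin.coe_castSucc] at h2
          constructor
          · rw [hfilter]; exact h2.1
          · rw [hfilter]; exact h2.2
      have hP₁0 : P₁ = 0 := ihl S' hS' P₁ hd₁ hvan₁
      have hΦ₁0 : Φ₁ = 0 := by
        rw [← hfse, ← hre, hP₁0, map_zero, map_zero]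
      have hΦ0 : Φ = 0 := by rw [hfac, hΦ₁0, mul_zero]
      have hPr0 : Pr = 0 := by
        apply (finSuccEquiv F (m + 1)).injective
        rw [← hΦdef, hΦ0]
        exact (map_zero _).symm
      have := rename_injective (R := F) (⇑(finRotate (m + 2)))
        (finRotate (m + 2)).injective
      apply this
      rw [← hPr, hPr0]
      exact (map_zero _).symm

/-- The Vandermonde matrix of the simplex `P_ℓ(m)` (monomials of total degree `≤ ℓ` in
`m + 1` variables) evaluated at an `(m+1)`-dimensional simplicial configuration of order
`ℓ` is nonsingular: its rows are linearly independent. -/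
theorem simplex_vandermonde_nonsingular {F : Type*} [Field F] [DecidableEq F] (m l : ℕ)
    (S : Finset (Fin (m + 1) → F)) (hS : IsSimplicialConfig F m l S) :
    LinearIndependent F
      (fun e : {e : Fin (m + 1) → Fin (l + 1) // ∑ i, ((e i : ℕ)) ≤ l} =>
        fun p : S => ∏ i, ((p : Fin (m + 1) → F) i) ^ ((e : Fin (m + 1) → Fin (l + 1)) i : ℕ)) := by
  rw [Fintype.linearIndependent_iff]
  intro g hg
  set key : {e : Fin (m + 1) → Fin (l + 1) // ∑ i, ((e i : ℕ)) ≤ l} → (Fin (m + 1) →₀ ℕ) :=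
    fun e => Finsupp.equivFunOnFinite.symm
      (fun i => ((e : Fin (m + 1) → Fin (l + 1)) i : ℕ)) with hkey
  have hkey_apply : ∀ e i, key e i = ((e : Fin (m + 1) → Fin (l + 1)) i : ℕ) := by
    intro e i
    simp [hkey]
  have hinj : Function.Injective key := by
    intro x y h
    apply Subtype.ext
    funext i
    have h2 : (fun i => ((x : Fin (m + 1) → Fin (l + 1)) i : ℕ))
        = fun i => ((y : Fin (m + 1) → Fin (l + 1)) i : ℕ) :=
      Finsupp.equivFunOnFinite.symm.injective h
    exact Fin.val_injective (congrFun h2 i)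
  set P : MvPolynomial (Fin (m + 1)) F := ∑ e, MvPolynomial.monomial (key e) (g e) with hP
  have hdeg : P.totalDegree ≤ l := by
    rw [hP]
    refine le_trans (MvPolynomial.totalDegree_finset_sum _ _) (Finset.sup_le ?_)
    intro e _
    refine le_trans (MvPolynomial.totalDegree_monomial_le _ _) ?_
    have h1 : ((key e).sum fun _ => id) = ∑ i, key e i :=
      Finsupp.sum_fintype _ _ (fun _ => rfl)
    rw [h1]
    calc ∑ i, key e i = ∑ i, ((e : Fin (m + 1) → Fin (l + 1)) i : ℕ) := by
          exact Finset.sum_congr rfl fun i _ => hkey_apply e i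
      _ ≤ l := e.2
  have hvan : ∀ p ∈ S, MvPolynomial.eval p P = 0 := by
    intro p hp
    have h1 := congrFun hg ⟨p, hp⟩
    simp only [Finset.sum_apply, Pi.smul_apply, smul_eq_mul] at h1
    rw [hP, map_sum]
    simp only [MvPolynomial.eval_monomial]
    have h2 : ∀ e : {e : Fin (m + 1) → Fin (l + 1) // ∑ i, ((e i : ℕ)) ≤ l},
        ((key e).prod fun i k => p i ^ k)
          = ∏ i, p i ^ ((e : Fin (m + 1) → Fin (l + 1)) i : ℕ) := by
      intro e
      rw [Finsupp.prod_pow]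
      exact Finset.prod_congr rfl fun i _ => by rw [hkey_apply e i]
    calc (∑ e, g e * ((key e).prod fun i k => p i ^ k))
        = ∑ e, g e * ∏ i, p i ^ ((e : Fin (m + 1) → Fin (l + 1)) i : ℕ) :=
          Finset.sum_congr rfl fun e _ => by rw [h2 e]
      _ = 0 := h1
  have hP0 : P = 0 := vanish_of_simplicialConfig m l S hS P hdeg hvan
  intro e
  have h2 : P.coeff (key e) = g e := by
    rw [hP, MvPolynomial.coeff_sum]
    simp only [MvPolynomial.coeff_monomial, hinj.eq_iff]
    rw [Finset.sum_ite_eq' Finset.univ e g]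
    simp
  rw [hP0, MvPolynomial.coeff_zero] at h2
  exact h2.symm
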